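/- arXiv:1106.4703 — 4 statements merged into one kernel-verified Lean document; each statement's English description precedes it below -/
import Mathlib

section
/- Let a < b be real numbers, let f ∈ C²([a,b)) satisfy lim_{τ→b} f(τ) = −∞ and lim_{τ→b} |f'(τ)|² e^{2γ̃ f(τ)} = m, where γ̃ > 0 and m > 0 are constants. Then b is finite. -/
open Filter Set

/-- If `f ∈ C²([a,b))` with `f(τ) → -∞` and `|f'(τ)|² e^{2γtil f(τ)} → m > 0` as `τ → b`
(where `b ≤ ∞`), then `b` is finite. -/
theorem big_crunch_time_is_finite (a : ℝ) (b : EReal) (hab : (a : EReal) < b)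
    (f : ℝ → ℝ) (γtil m : ℝ) (hγtil : 0 < γtil) (hm : 0 < m)
    (hf : ContDiffOn ℝ 2 f {τ : ℝ | a ≤ τ ∧ (τ : EReal) < b})
    (h1 : Filter.Tendsto f
      (Filter.comap (fun τ : ℝ => (τ : EReal)) (nhdsWithin b (Set.Iio b))) Filter.atBot)
    (h2 : Filter.Tendsto (fun τ : ℝ => (deriv f τ) ^ 2 * Real.exp (2 * γtil * f τ))
      (Filter.comap (fun τ : ℝ => (τ : EReal)) (nhdsWithin b (Set.Iio b))) (nhds m)) :
    b ≠ ⊤ := by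
  intro hb
  subst hb
  -- the comap filter is above atTop
  have hcoe : Tendsto (fun τ : ℝ => (τ : EReal)) atTop (nhdsWithin ⊤ (Set.Iio ⊤)) := by
    apply tendsto_nhdsWithin_of_tendsto_nhds_of_eventually_within
    · rw [EReal.tendsto_nhds_top_iff_real]
      intro x
      filter_upwards [eventually_gt_atTop x] with y hy
      exact_mod_cast hy
    · exact Eventually.of_forall fun x => EReal.coe_lt_top x
  have hle : atTop ≤ Filter.comap (fun τ : ℝ => (τ : EReal)) (nhdsWithin ⊤ (Set.Iio ⊤)) :=
    tendsto_iff_comap.mp hcoe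
  have H1 : Tendsto f atTop atBot := h1.mono_left hle
  have H2 : Tendsto (fun τ : ℝ => (deriv f τ) ^ 2 * Real.exp (2 * γtil * f τ)) atTop (nhds m) :=
    h2.mono_left hle
  -- the domain is Ici a
  have hset : {τ : ℝ | a ≤ τ ∧ (τ : EReal) < ⊤} = Set.Ici a := by
    ext τ; simp [EReal.coe_lt_top]
  rw [hset] at hf
  have hderiv : ∀ τ : ℝ, a < τ → HasDerivAt f (deriv f τ) τ := by
    intro τ hτ
    have h := hf.contDiffAt (Ici_mem_nhds hτ)
    exact (h.differentiableAt (by norm_num)).hasDerivAt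
  set g : ℝ → ℝ := fun τ => Real.exp (γtil * f τ) with hgdef
  set φ : ℝ → ℝ := fun τ => Real.exp (γtil * f τ) * (γtil * deriv f τ) with hφdef
  have hg : ∀ τ : ℝ, a < τ → HasDerivAt g (φ τ) τ := by
    intro τ hτ
    exact ((hderiv τ hτ).const_mul γtil).exp
  -- |φ| in terms of the hypothesis quantity
  have habs : ∀ τ : ℝ, |φ τ| = γtil * Real.sqrt ((deriv f τ) ^ 2 * Real.exp (2 * γtil * f τ)) := by
    intro τ
    have he : Real.exp (2 * γtil * f τ) = (Real.exp (γtil * f τ)) ^ 2 := by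
      rw [← Real.exp_nat_mul]; ring_nf
    rw [he, ← mul_pow, Real.sqrt_sq_eq_abs, hφdef]
    rw [abs_mul, abs_mul, abs_of_pos hγtil, abs_of_pos (Real.exp_pos _), abs_mul,
      abs_of_pos (Real.exp_pos _)]
    ring
  have hφlim : Tendsto (fun τ => |φ τ|) atTop (nhds (γtil * Real.sqrt m)) := by
    have := (Real.continuous_sqrt.tendsto m).comp H2
    have h2' := this.const_mul γtil
    apply h2'.congr
    intro τ
    exact (habs τ).symm
  -- g tends to 0
  have hglim : Tendsto g atTop (nhds 0) := by
    apply Real.tendsto_exp_atBot.comp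
    exact H1.const_mul_atBot hγtil
  -- sequence
  set x : ℕ → ℝ := fun n => a + 1 + n with hxdef
  have hxa : ∀ n : ℕ, a < x n := fun n => by
    simp only [hxdef]; have : (0:ℝ) ≤ n := Nat.cast_nonneg n; linarith
  have hMVT : ∀ n : ℕ, ∃ c ∈ Ioo (x n) (x n + 1), φ c = (g (x n + 1) - g (x n)) / (x n + 1 - x n) := by
    intro n
    apply exists_hasDerivAt_eq_slope g φ (by linarith)
    · intro τ hτ
      have : a < τ := lt_of_lt_of_le (hxa n) hτ.1
      exact (hg τ this).continuousAt.continuousWithinAt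
    · intro τ hτ
      exact hg τ (lt_trans (hxa n) hτ.1)
  choose c hc hφc using hMVT
  have hceq : ∀ n, φ (c n) = g (x n + 1) - g (x n) := by
    intro n
    rw [hφc n]
    field_simp
    ring
  -- c n → ∞
  have hcx : Tendsto c atTop atTop := by
    apply tendsto_atTop_mono (fun n => (hc n).1.le)
    simp only [hxdef]
    apply tendsto_atTop_add_const_left
    exact tendsto_natCast_atTop_atTop
  have lim1 : Tendsto (fun n => |φ (c n)|) atTop (nhds (γtil * Real.sqrt m)) :=
    hφlim.comp hcx
  have lim2 : Tendsto (fun n => |φ (c n)|) atTop (nhds 0) := by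
    have hx1 : Tendsto (fun n : ℕ => x n) atTop atTop := by
      simp only [hxdef]
      apply tendsto_atTop_add_const_left
      exact tendsto_natCast_atTop_atTop
    have hx2 : Tendsto (fun n : ℕ => x n + 1) atTop atTop :=
      tendsto_atTop_add_const_right _ _ hx1
    have : Tendsto (fun n => g (x n + 1) - g (x n)) atTop (nhds (0 - 0)) :=
      (hglim.comp hx2).sub (hglim.comp hx1)
    rw [sub_zero] at this
    have := this.abs
    rw [abs_zero] at this
    apply this.congr
    intro n
    rw [hceq n]
  have := tendsto_nhds_unique lim1 lim2
  have h0 : 0 < γtil * Real.sqrt m := mul_pos hγtil (Real.sqrt_pos.mpr hm)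
  linarith
end

section
/- Let f ∈ C²([a,0)) satisfy f' < 0, lim_{τ→0⁻} f(τ) = −∞ and lim_{τ→0⁻} |f'(τ)|² e^{2γ̃ f(τ)} = m with γ̃, m > 0. Then lim_{τ→0⁻} e^{γ̃ f(τ)}/τ = −γ̃ √m. -/
/-- If `f ∈ C²([a,0))` with `f' < 0`, `f(τ) → -∞` and `|f'|² e^{2γtil f} → m > 0` as `τ → 0⁻`,
then `e^{γtil f(τ)}/τ → -γtil √m` as `τ → 0⁻`. -/
theorem lim_exp_gamma_f_div_tau (a : ℝ) (ha : a < 0) (f : ℝ → ℝ) (γtil m : ℝ)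
    (hγtil : 0 < γtil) (hm : 0 < m)
    (hf : ContDiffOn ℝ 2 f (Set.Ico a 0))
    (hf' : ∀ τ ∈ Set.Ico a (0:ℝ), deriv f τ < 0)
    (h1 : Filter.Tendsto f (nhdsWithin 0 (Set.Iio 0)) Filter.atBot)
    (h2 : Filter.Tendsto (fun τ : ℝ => (deriv f τ) ^ 2 * Real.exp (2 * γtil * f τ))
      (nhdsWithin 0 (Set.Iio 0)) (nhds m)) :
    Filter.Tendsto (fun τ : ℝ => Real.exp (γtil * f τ) / τ)
      (nhdsWithin 0 (Set.Iio 0)) (nhds (-γtil * Real.sqrt m)) := by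
  have hmem : Set.Ioo a 0 ∈ nhdsWithin (0:ℝ) (Set.Iio 0) :=
    Ioo_mem_nhdsLT_of_mem ⟨ha, le_refl 0⟩
  have hdiffOn : DifferentiableOn ℝ f (Set.Ico a 0) := hf.differentiableOn (by norm_num)
  have hdiff : ∀ x ∈ Set.Ioo a 0, DifferentiableAt ℝ f x := fun x hx =>
    hdiffOn.differentiableAt (Filter.mem_of_superset (isOpen_Ioo.mem_nhds hx)
      Set.Ioo_subset_Ico_self)
  -- key limit: f' * exp(γ f) → -√m
  have hsq : Filter.Tendsto
      (fun τ : ℝ => Real.sqrt ((deriv f τ) ^ 2 * Real.exp (2 * γtil * f τ)))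
      (nhdsWithin 0 (Set.Iio 0)) (nhds (Real.sqrt m)) :=
    (Real.continuous_sqrt.continuousAt.tendsto.comp h2)
  have hkey : Filter.Tendsto (fun τ : ℝ => deriv f τ * Real.exp (γtil * f τ))
      (nhdsWithin 0 (Set.Iio 0)) (nhds (-Real.sqrt m)) := by
    refine (hsq.neg).congr' ?_
    filter_upwards [hmem] with x hx
    have hfx : deriv f x < 0 := hf' x ⟨le_of_lt hx.1, hx.2⟩
    have hprod : deriv f x * Real.exp (γtil * f x) < 0 :=
      mul_neg_of_neg_of_pos hfx (Real.exp_pos _)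
    have : (deriv f x) ^ 2 * Real.exp (2 * γtil * f x)
        = (deriv f x * Real.exp (γtil * f x)) ^ 2 := by
      rw [mul_pow, ← Real.exp_nat_mul]
      ring_nf
    rw [this, Real.sqrt_sq_eq_abs, abs_of_neg hprod, neg_neg]
  -- L'Hôpital
  have hF0 : Filter.Tendsto (fun τ : ℝ => Real.exp (γtil * f τ))
      (nhdsWithin 0 (Set.Iio 0)) (nhds 0) :=
    Real.tendsto_exp_atBot.comp (h1.const_mul_atBot hγtil)
  have hG0 : Filter.Tendsto (fun τ : ℝ => τ) (nhdsWithin (0:ℝ) (Set.Iio 0)) (nhds 0) :=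
    Filter.tendsto_id.mono_left nhdsWithin_le_nhds
  refine deriv.lhopital_zero_nhdsLT ?_ ?_ hF0 hG0 ?_
  · filter_upwards [hmem] with x hx
    exact (Real.differentiableAt_exp.comp x ((hdiff x hx).const_mul γtil))
  · filter_upwards [hmem] with x hx
    simp
  · have : Filter.Tendsto (fun τ : ℝ => γtil * (deriv f τ * Real.exp (γtil * f τ)))
        (nhdsWithin 0 (Set.Iio 0)) (nhds (γtil * (-Real.sqrt m))) := hkey.const_mul γtil
    rw [show γtil * (-Real.sqrt m) = -γtil * Real.sqrt m by ring] at this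
    refine this.congr' ?_
    filter_upwards [hmem] with x hx
    have hd : HasDerivAt (fun τ => Real.exp (γtil * f τ))
        (Real.exp (γtil * f x) * (γtil * deriv f x)) x := by
      exact (Real.hasDerivAt_exp _).comp x (((hdiff x hx).hasDerivAt).const_mul γtil)
    rw [hd.deriv, deriv_id'']
    ring
end

section
/- Let f ∈ C²([a,0)) satisfy f' < 0, lim_{τ→0⁻} f(τ) = −∞, lim_{τ→0⁻} |f'(τ)|² e^{2γ̃ f(τ)} = m with γ̃, m > 0, and assume the limit lim_{τ→0⁻} (f'' + γ̃ |f'|²)(τ) exists. Then there exists a constant c such that lim_{τ→0⁻} (f'(τ) e^{γ̃ f(τ)} + √m)/τ² = c. -/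
open Filter Set Real
open scoped Topology

/-- Under the standard ARW asymptotics for `f`, and assuming `f'' + γtil|f'|²` has a limit
at `0⁻`, there is a constant `c` with `(f' e^{γtil f} + √m)/τ² → c` as `τ → 0⁻`. -/
theorem asymptotic_f_prime_exp (a : ℝ) (ha : a < 0) (f : ℝ → ℝ) (γtil m : ℝ)
    (hγtil : 0 < γtil) (hm : 0 < m)
    (hf : ContDiffOn ℝ 2 f (Set.Ico a 0))
    (hf' : ∀ τ ∈ Set.Ico a (0:ℝ), deriv f τ < 0)
    (h1 : Filter.Tendsto f (nhdsWithin 0 (Set.Iio 0)) Filter.atBot)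
    (h2 : Filter.Tendsto (fun τ : ℝ => (deriv f τ) ^ 2 * Real.exp (2 * γtil * f τ))
      (nhdsWithin 0 (Set.Iio 0)) (nhds m))
    (h3 : ∃ L : ℝ, Filter.Tendsto (fun τ : ℝ => deriv (deriv f) τ + γtil * (deriv f τ) ^ 2)
      (nhdsWithin 0 (Set.Iio 0)) (nhds L)) :
    ∃ c : ℝ, Filter.Tendsto
      (fun τ : ℝ => (deriv f τ * Real.exp (γtil * f τ) + Real.sqrt m) / τ ^ 2)
      (nhdsWithin 0 (Set.Iio 0)) (nhds c) := by
  obtain ⟨L, hL⟩ := h3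
  set E : ℝ → ℝ := fun τ => Real.exp (γtil * f τ) with hE_def
  set g : ℝ → ℝ := fun τ => deriv f τ * E τ with hg_def
  have hs : IsOpen (Set.Ioo a (0:ℝ)) := isOpen_Ioo
  have hmem : Set.Ioo a (0:ℝ) ∈ 𝓝[<] (0:ℝ) :=
    Ioo_mem_nhdsLT_of_mem ⟨ha, le_refl 0⟩
  have hfs : ContDiffOn ℝ 2 f (Set.Ioo a 0) := hf.mono Set.Ioo_subset_Ico_self
  -- differentiability of f on the open interval
  have hdf : ∀ x ∈ Set.Ioo a (0:ℝ), DifferentiableAt ℝ f x := fun x hx =>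
    (hfs.differentiableOn (by norm_num)).differentiableAt (hs.mem_nhds hx)
  have hfs' : ContDiffOn ℝ 1 (deriv f) (Set.Ioo a 0) :=
    hfs.deriv_of_isOpen hs (by norm_num)
  have hdf' : ∀ x ∈ Set.Ioo a (0:ℝ), DifferentiableAt ℝ (deriv f) x := fun x hx =>
    (hfs'.differentiableOn one_ne_zero).differentiableAt (hs.mem_nhds hx)
  -- derivative of E
  have hEderiv : ∀ x ∈ Set.Ioo a (0:ℝ),
      HasDerivAt E (γtil * deriv f x * E x) x := by
    intro x hx
    have h := (((hdf x hx).hasDerivAt).const_mul γtil).exp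
    convert h using 1
    ring
  -- derivative of g
  have hgderiv : ∀ x ∈ Set.Ioo a (0:ℝ),
      HasDerivAt g ((deriv (deriv f) x + γtil * (deriv f x) ^ 2) * E x) x := by
    intro x hx
    have h := ((hdf' x hx).hasDerivAt).fun_mul (hEderiv x hx).differentiableAt.hasDerivAt
    have hEq : deriv E x = γtil * deriv f x * E x := (hEderiv x hx).deriv
    rw [hEq] at h
    exact h.congr_deriv (by ring)
  -- E → 0 at 0⁻
  have hE0 : Tendsto E (𝓝[<] (0:ℝ)) (𝓝 0) :=
    Real.tendsto_exp_atBot.comp (h1.const_mul_atBot hγtil)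
  -- g² → m
  have hg2 : Tendsto (fun τ => g τ ^ 2) (𝓝[<] (0:ℝ)) (𝓝 m) := by
    refine h2.congr fun τ => ?_
    simp only [hg_def, hE_def, mul_pow]
    rw [pow_two (Real.exp _), ← Real.exp_add]
    congr 2
    ring
  -- g → -√m
  have hgneg : ∀ᶠ τ in 𝓝[<] (0:ℝ), g τ < 0 := by
    filter_upwards [hmem] with τ hτ
    exact mul_neg_of_neg_of_pos (hf' τ (Set.Ioo_subset_Ico_self hτ)) (Real.exp_pos _)
  have hg : Tendsto g (𝓝[<] (0:ℝ)) (𝓝 (-Real.sqrt m)) := by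
    have h1' : Tendsto (fun τ => -Real.sqrt (g τ ^ 2)) (𝓝[<] (0:ℝ)) (𝓝 (-Real.sqrt m)) :=
      ((Real.continuous_sqrt.tendsto m).comp hg2).neg
    refine h1'.congr' ?_
    filter_upwards [hgneg] with τ hτ
    rw [Real.sqrt_sq_eq_abs, abs_of_neg hτ, neg_neg]
  -- l'Hôpital I : E τ / τ → -(γtil * √m)
  have hEτ : Tendsto (fun τ => E τ / τ) (𝓝[<] (0:ℝ)) (𝓝 (-(γtil * Real.sqrt m))) := by
    refine HasDerivAt.lhopital_zero_nhdsLT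
      (f' := fun x => γtil * deriv f x * E x) (g' := fun _ => (1:ℝ)) ?_ ?_ ?_ hE0 ?_ ?_
    · filter_upwards [hmem] with x hx; exact hEderiv x hx
    · exact Eventually.of_forall fun x => hasDerivAt_id x
    · exact Eventually.of_forall fun x => one_ne_zero
    · exact (continuous_id.tendsto 0).mono_left nhdsWithin_le_nhds
    · have : Tendsto (fun x => γtil * g x) (𝓝[<] (0:ℝ)) (𝓝 (γtil * -Real.sqrt m)) :=
        hg.const_mul γtil
      refine this.congr' ?_ |>.congr (fun x => rfl) |>.mono_right ?_
      · filter_upwards with x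
        simp [hg_def]; ring
      · rw [show γtil * -Real.sqrt m = -(γtil * Real.sqrt m) by ring]
  -- l'Hôpital II : (g τ + √m)/τ² → L * (-(γtil*√m)) / 2
  refine ⟨L * -(γtil * Real.sqrt m) / 2, ?_⟩
  have main : Tendsto (fun τ => (g τ + Real.sqrt m) / τ ^ 2) (𝓝[<] (0:ℝ))
      (𝓝 (L * -(γtil * Real.sqrt m) / 2)) := by
    refine HasDerivAt.lhopital_zero_nhdsLT
      (f' := fun x => (deriv (deriv f) x + γtil * (deriv f x) ^ 2) * E x)
      (g' := fun x => 2 * x) ?_ ?_ ?_ ?_ ?_ ?_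
    · filter_upwards [hmem] with x hx
      exact (hgderiv x hx).add_const _
    · refine Eventually.of_forall fun x => ?_
      have h := (hasDerivAt_pow 2 x)
      exact h.congr_deriv (by norm_num)
    · filter_upwards [self_mem_nhdsWithin] with x hx
      have : x < 0 := hx
      intro hcon
      nlinarith
    · have := hg.add_const (Real.sqrt m)
      simpa using this
    · have : Tendsto (fun x : ℝ => x ^ 2) (𝓝 (0:ℝ)) (𝓝 (0 ^ 2)) :=
        (continuous_pow 2).tendsto 0
      simpa using this.mono_left nhdsWithin_le_nhds
    · have h := (hL.mul hEτ).div_const 2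
      refine h.congr' ?_
      filter_upwards [self_mem_nhdsWithin] with x hx
      have hx0 : (x:ℝ) ≠ 0 := ne_of_lt hx
      rw [mul_div_assoc, mul_div_assoc, div_div, mul_comm x 2]
  exact main
end

section
/- Under the same hypotheses as the previous statement, there exists a constant c such that lim_{τ→0⁻} (γ̃ f'(τ) τ − 1)/τ² = c. -/
open Filter Set Topology


/-- Under the same hypotheses, there is a constant `c` with
`(γtil f'(τ) τ − 1)/τ² → c` as `τ → 0⁻`. -/
theorem asymptotic_relation_for_f_prime (a : ℝ) (ha : a < 0) (f : ℝ → ℝ) (γtil m : ℝ)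
    (hγtil : 0 < γtil) (hm : 0 < m)
    (hf : ContDiffOn ℝ 2 f (Set.Ico a 0))
    (hf' : ∀ τ ∈ Set.Ico a (0:ℝ), deriv f τ < 0)
    (h1 : Filter.Tendsto f (nhdsWithin 0 (Set.Iio 0)) Filter.atBot)
    (h2 : Filter.Tendsto (fun τ : ℝ => (deriv f τ) ^ 2 * Real.exp (2 * γtil * f τ))
      (nhdsWithin 0 (Set.Iio 0)) (nhds m))
    (h3 : ∃ L : ℝ, Filter.Tendsto (fun τ : ℝ => deriv (deriv f) τ + γtil * (deriv f τ) ^ 2)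
      (nhdsWithin 0 (Set.Iio 0)) (nhds L)) :
    ∃ c : ℝ, Filter.Tendsto (fun τ : ℝ => (γtil * deriv f τ * τ - 1) / τ ^ 2)
      (nhdsWithin 0 (Set.Iio 0)) (nhds c) := by
  obtain ⟨L, hL⟩ := h3
  set s : Filter ℝ := nhdsWithin 0 (Set.Iio 0) with hs
  set g : ℝ → ℝ := fun τ => Real.exp (γtil * f τ) with hgdef
  set g1 : ℝ → ℝ := fun τ => γtil * deriv f τ * g τ with hg1def
  set g2 : ℝ → ℝ := fun τ =>
    γtil * (deriv (deriv f) τ + γtil * (deriv f τ) ^ 2) * g τ with hg2def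
  have hmem : Set.Ioo a 0 ∈ s := Ioo_mem_nhdsLT_of_mem ⟨ha, le_refl 0⟩
  have hev : ∀ᶠ τ in s, τ ∈ Set.Ioo a 0 := hmem
  have hgpos : ∀ τ, 0 < g τ := fun τ => Real.exp_pos _
  -- differentiability facts on Ioo a 0
  have hf2 : ContDiffOn ℝ 2 f (Set.Ioo a 0) := hf.mono Set.Ioo_subset_Ico_self
  have hdf1 : ContDiffOn ℝ 1 (deriv f) (Set.Ioo a 0) := by
    have := hf2.deriv_of_isOpen isOpen_Ioo (m := 1) (by norm_num)
    exact this
  have hd1 : ∀ τ ∈ Set.Ioo a 0, HasDerivAt f (deriv f τ) τ := by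
    intro τ hτ
    have : DifferentiableAt ℝ f τ :=
      (hf2.differentiableOn (by norm_num)).differentiableAt (isOpen_Ioo.mem_nhds hτ)
    exact this.hasDerivAt
  have hd2 : ∀ τ ∈ Set.Ioo a 0, HasDerivAt (deriv f) (deriv (deriv f) τ) τ := by
    intro τ hτ
    have : DifferentiableAt ℝ (deriv f) τ :=
      (hdf1.differentiableOn (by norm_num)).differentiableAt (isOpen_Ioo.mem_nhds hτ)
    exact this.hasDerivAt
  have hgd : ∀ τ ∈ Set.Ioo a 0, HasDerivAt g (g1 τ) τ := by
    intro τ hτ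
    have h := ((hd1 τ hτ).const_mul γtil).exp
    convert h using 1
    simp [hg1def, hgdef]; ring
  have hg1d : ∀ τ ∈ Set.Ioo a 0, HasDerivAt g1 (g2 τ) τ := by
    intro τ hτ
    have h := (((hd2 τ hτ).const_mul γtil).mul (hgd τ hτ))
    refine h.congr_deriv ?_
    simp [hg2def, hg1def]; ring
  -- limit facts
  have hgt0 : Tendsto g s (nhds 0) := by
    have : Tendsto (fun τ => γtil * f τ) s atBot := h1.const_mul_atBot hγtil
    exact Real.tendsto_exp_atBot.comp this
  have hE : Tendsto (fun τ => deriv f τ * g τ) s (nhds (-Real.sqrt m)) := by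
    have hq : Tendsto (fun τ => Real.sqrt ((deriv f τ) ^ 2 * Real.exp (2 * γtil * f τ))) s
        (nhds (Real.sqrt m)) := (Real.continuous_sqrt.tendsto m).comp h2
    have heq : ∀ᶠ τ in s, -Real.sqrt ((deriv f τ) ^ 2 * Real.exp (2 * γtil * f τ))
        = deriv f τ * g τ := by
      filter_upwards [hev] with τ hτ
      have h1' : (deriv f τ) ^ 2 * Real.exp (2 * γtil * f τ) = (deriv f τ * g τ) ^ 2 := by
        simp only [hgdef, mul_pow]
        congr 1
        rw [sq, ← Real.exp_add]
        ring_nf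
      rw [h1', Real.sqrt_sq_eq_abs, abs_of_nonpos, neg_neg]
      exact mul_nonpos_of_nonpos_of_nonneg
        (le_of_lt (hf' τ (Set.Ioo_subset_Ico_self hτ))) (le_of_lt (hgpos τ))
    exact Tendsto.congr' heq hq.neg
  set b : ℝ := -(γtil * Real.sqrt m) with hbdef
  have hb : b ≠ 0 := by
    have : 0 < Real.sqrt m := Real.sqrt_pos.2 hm
    simp only [hbdef]
    nlinarith
  have hg1lim : Tendsto g1 s (nhds b) := by
    have := hE.const_mul γtil
    simpa [hg1def, mul_assoc, mul_neg] using this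
  -- g τ / τ → b by L'Hôpital
  have htid : Tendsto (fun τ : ℝ => τ) s (nhds 0) :=
    tendsto_id.mono_left nhdsWithin_le_nhds
  have hgratio : Tendsto (fun τ => g τ / τ) s (nhds b) := by
    apply HasDerivAt.lhopital_zero_nhdsLT (f' := g1) (g' := fun _ => (1:ℝ))
    · filter_upwards [hev] with τ hτ; exact hgd τ hτ
    · filter_upwards with τ; exact hasDerivAt_id τ
    · filter_upwards with τ; norm_num
    · exact hgt0
    · exact htid
    · simpa using hg1lim
  have hg2ratio : Tendsto (fun τ => g2 τ / τ) s (nhds (γtil * L * b)) := by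
    have h := (hL.const_mul γtil).mul hgratio
    apply Tendsto.congr _ h
    intro τ
    simp only [hg2def, mul_div_assoc]
    try ring
  -- main L'Hôpital : (g1 τ * τ - g τ)/τ^3 → γtil*L*b/3
  have hτneg : ∀ᶠ τ in s, τ < 0 := by
    have : Set.Iio (0:ℝ) ∈ s := self_mem_nhdsWithin
    filter_upwards [this] with τ hτ; exact hτ
  have hR : Tendsto (fun τ => (g1 τ * τ - g τ) / τ ^ 3) s (nhds (γtil * L * b / 3)) := by
    apply HasDerivAt.lhopital_zero_nhdsLT (f' := fun τ => g2 τ * τ)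
      (g' := fun τ => 3 * τ ^ 2)
    · filter_upwards [hev] with τ hτ
      have h := ((hg1d τ hτ).mul (hasDerivAt_id τ)).sub (hgd τ hτ)
      refine h.congr_deriv ?_
      simp only [hg1def, hg2def, id_eq]
      ring
    · filter_upwards with τ
      have := hasDerivAt_pow 3 τ
      refine this.congr_deriv ?_
      try norm_num
    · filter_upwards [hτneg] with τ hτ
      have hτ0 : τ ≠ 0 := ne_of_lt hτ
      positivity
    · have : Tendsto (fun τ => g1 τ * τ - g τ) s (nhds (b * 0 - 0)) :=
        (hg1lim.mul htid).sub hgt0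
      simpa using this
    · have : Tendsto (fun τ : ℝ => τ ^ 3) s (nhds (0 ^ 3)) := htid.pow 3
      simpa using this
    · have h := hg2ratio.div_const 3
      apply Tendsto.congr' _ h
      filter_upwards [hτneg] with τ hτ
      have hτ0 : τ ≠ 0 := ne_of_lt hτ
      field_simp
  have hinv : Tendsto (fun τ => τ / g τ) s (nhds b⁻¹) := by
    have h := hgratio.inv₀ hb
    apply Tendsto.congr _ h
    intro τ
    rw [inv_div]
  refine ⟨γtil * L * b / 3 * b⁻¹, ?_⟩
  have h := hR.mul hinv
  apply Tendsto.congr' _ h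
  filter_upwards [hτneg] with τ hτ
  have hτ0 : τ ≠ 0 := ne_of_lt hτ
  have hg0 : g τ ≠ 0 := ne_of_gt (hgpos τ)
  simp only [hg1def]
  field_simp
end
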